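/- For all natural numbers n ≥ 3 and k with 1 ≤ k ≤ n−1, setting p = k/n (so that n·p = k and n·p·(1−p) = k·(n−k)/n), the binomial probability at its mean satisfies C(n,k) · p^k · (1−p)^{n−k} ≥ 9 / (10 · √(2·π·n·p·(1−p))). -/

import Mathlib

open Stirling Real Filter Nat Finset Topology


lemma sqrtpi_le_stirlingSeq (n : ℕ) (hn : 1 ≤ n) : Real.sqrt π ≤ stirlingSeq n := by
  obtain ⟨m, rfl⟩ : ∃ m, n = m + 1 := ⟨n - 1, by omega⟩
  have h1 : Tendsto (stirlingSeq ∘ Nat.succ) atTop (𝓝 (Real.sqrt π)) :=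
    tendsto_stirlingSeq_sqrt_pi.comp (tendsto_add_atTop_nat 1)
  exact stirlingSeq'_antitone.le_of_tendsto h1 m

lemma exp_five_le : Real.exp (5/48) ≤ 10/9 := by
  have h := Real.exp_bound' (x := 5/48) (by norm_num) (by norm_num) (n := 3) (by norm_num)
  rw [Finset.sum_range_succ, Finset.sum_range_succ, Finset.sum_range_succ] at h
  norm_num [Nat.factorial] at h
  linarith

lemma diff_le_twelfth (n : ℕ) :
    Real.log (stirlingSeq (n + 1)) - Real.log (stirlingSeq (n + 2)) ≤
      1/12 * (1/((n:ℝ)+1) - 1/((n:ℝ)+2)) := by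
  set r : ℝ := ((1 : ℝ) / (2 * ((n:ℕ)+1 : ℕ) + 1)) ^ 2 with hr
  have hr0 : (0:ℝ) ≤ r := sq_nonneg _
  have hr1 : r < 1 := by
    rw [hr]
    rw [one_div, inv_pow]
    refine inv_lt_one_of_one_lt₀ (one_lt_pow₀ ?_ two_ne_zero)
    push_cast
    nlinarith [Nat.cast_nonneg (α := ℝ) n]
  have g : HasSum (fun j : ℕ => (1/3 : ℝ) * r ^ (j + 1)) ((1/3) * (r / (1 - r))) := by
    have := (hasSum_geometric_of_lt_one hr0 hr1).mul_left r
    simp_rw [← _root_.pow_succ'] at this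
    rw [div_eq_mul_inv]
    exact this.mul_left (1/3)
  have hab : ∀ j : ℕ, (1 : ℝ) / (2 * ↑(j + 1) + 1) * r ^ (j+1) ≤ (1/3 : ℝ) * r ^ (j + 1) := by
    intro j
    apply mul_le_mul_of_nonneg_right _ (pow_nonneg hr0 _)
    rw [div_le_div_iff₀ (by positivity) (by norm_num)]
    push_cast
    linarith [Nat.cast_nonneg (α := ℝ) j]
  have hle := hasSum_le hab (log_stirlingSeq_diff_hasSum n) g
  refine hle.trans (le_of_eq ?_)
  have hn0 : (0:ℝ) ≤ (n:ℝ) := Nat.cast_nonneg n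
  have key : 1 - r = (4*((n:ℝ)+1)*((n:ℝ)+2))/(2*((n:ℝ)+1)+1)^2 := by
    rw [hr]; push_cast; field_simp; ring
  rw [hr] at key ⊢
  push_cast at key ⊢
  rw [key]
  have h1 : ((n:ℝ)+1) ≠ 0 := by positivity
  have h2 : ((n:ℝ)+2) ≠ 0 := by positivity
  have h3 : (2*((n:ℝ)+1)+1) ≠ 0 := by positivity
  field_simp
  ring

lemma stirlingSeq_le_aux (m : ℕ) :
    stirlingSeq (m+1) ≤ Real.sqrt π * Real.exp (1/(12*((m:ℝ)+1))) := by
  have key : ∀ N : ℕ, Real.log (stirlingSeq (m+1)) - Real.log (stirlingSeq (m+1+N)) ≤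
      1/12 * (1/((m:ℝ)+1) - 1/((m:ℝ)+1+N)) := by
    intro N
    induction N with
    | zero => simp
    | succ N ih =>
      have h2 := diff_le_twelfth (m+N)
      have e1 : m+1+(N+1) = (m+N)+2 := by omega
      have e2 : m+1+N = (m+N)+1 := by omega
      rw [e1]
      rw [e2] at ih
      push_cast at *
      have e3 : ((m:ℝ)+1+(N:ℝ)) = (m:ℝ)+(N:ℝ)+1 := by ring
      have e4 : ((m:ℝ)+1+((N:ℝ)+1)) = (m:ℝ)+(N:ℝ)+2 := by ring
      rw [e3] at ih
      rw [e4]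
      linarith
  have hmono : Tendsto (fun N : ℕ => m+1+N) atTop atTop :=
    tendsto_atTop_mono (fun N => Nat.le_add_left N (m+1)) tendsto_id
  have hlim : Tendsto (fun N : ℕ => Real.log (stirlingSeq (m+1+N))) atTop
      (𝓝 (Real.log (Real.sqrt π))) :=
    (tendsto_stirlingSeq_sqrt_pi.comp hmono).log (by positivity)
  have hN : ∀ N : ℕ, Real.log (stirlingSeq (m+1)) - 1/(12*((m:ℝ)+1)) ≤
      Real.log (stirlingSeq (m+1+N)) := by
    intro N
    have h1 : (0:ℝ) ≤ 1/((m:ℝ)+1+N) := by positivity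
    have := key N
    have hq : 1/12 * (1/((m:ℝ)+1) - 1/((m:ℝ)+1+N)) ≤ 1/(12*((m:ℝ)+1)) := by
      rw [one_div (12*((m:ℝ)+1)), mul_inv, ← one_div, ← one_div]
      linarith
    linarith
  have hle := ge_of_tendsto' hlim hN
  have hpos := stirlingSeq'_pos m
  have : Real.log (stirlingSeq (m+1)) ≤ Real.log (Real.sqrt π) + 1/(12*((m:ℝ)+1)) := by
    linarith
  calc stirlingSeq (m+1) = Real.exp (Real.log (stirlingSeq (m+1))) := (Real.exp_log hpos).symm
    _ ≤ Real.exp (Real.log (Real.sqrt π) + 1/(12*((m:ℝ)+1))) := Real.exp_le_exp.mpr this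
    _ = Real.sqrt π * Real.exp (1/(12*((m:ℝ)+1))) := by
        rw [Real.exp_add, Real.exp_log (by positivity)]

lemma fact_eq (j : ℕ) (hj : 1 ≤ j) :
    (j ! : ℝ) = stirlingSeq j * (Real.sqrt (2*j) * ((j:ℝ)/Real.exp 1)^j) := by
  rw [stirlingSeq, div_mul_cancel₀]
  have hj' : (0:ℝ) < j := by exact_mod_cast hj
  positivity

lemma fact_lb (j : ℕ) (hj : 1 ≤ j) :
    Real.sqrt π * (Real.sqrt (2*j) * ((j:ℝ)/Real.exp 1)^j) ≤ (j ! : ℝ) := by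
  rw [fact_eq j hj]
  have hj' : (0:ℝ) < j := by exact_mod_cast hj
  have : (0:ℝ) ≤ Real.sqrt (2*j) * ((j:ℝ)/Real.exp 1)^j := by positivity
  exact mul_le_mul_of_nonneg_right (sqrtpi_le_stirlingSeq j hj) this

lemma fact_ub (j : ℕ) (hj : 1 ≤ j) :
    (j ! : ℝ) ≤ Real.sqrt π * Real.exp (1/(12*(j:ℝ))) *
      (Real.sqrt (2*j) * ((j:ℝ)/Real.exp 1)^j) := by
  obtain ⟨i, rfl⟩ : ∃ i, j = i + 1 := ⟨j - 1, by omega⟩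
  rw [fact_eq _ hj]
  have h := stirlingSeq_le_aux i
  have hj' : (0:ℝ) < ((i:ℕ)+1 : ℕ) := by positivity
  have hD : (0:ℝ) ≤ Real.sqrt (2*((i:ℕ)+1:ℕ)) * ((((i:ℕ)+1:ℕ):ℝ)/Real.exp 1)^(i+1) := by positivity
  refine (mul_le_mul_of_nonneg_right ?_ hD)
  push_cast
  exact h

lemma core (k m : ℕ) (hk : 1 ≤ k) (hm : 1 ≤ m)
    (hexp : Real.exp (1/(12*(k:ℝ)) + 1/(12*(m:ℝ))) ≤ 10/9) :
    9 / (10 * Real.sqrt (2 * π * ((k:ℝ)+m) * ((k:ℝ)/((k:ℝ)+m)) * ((m:ℝ)/((k:ℝ)+m))))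
      ≤ ((k+m).choose k : ℝ) * ((k:ℝ)/((k:ℝ)+m)) ^ k * ((m:ℝ)/((k:ℝ)+m)) ^ m := by
  have hK : (0:ℝ) < k := by exact_mod_cast hk
  have hM : (0:ℝ) < m := by exact_mod_cast hm
  set K : ℝ := (k:ℝ) with hKdef
  set M : ℝ := (m:ℝ) with hMdef
  set N : ℝ := K + M with hNdef
  have hN : (0:ℝ) < N := by positivity
  set E : ℝ := Real.exp 1 with hEdef
  have hE : (0:ℝ) < E := Real.exp_pos 1
  set A : ℝ := Real.sqrt π * (Real.sqrt (2*N) * (N/E)^(k+m)) with hAdef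
  set B : ℝ := Real.sqrt π * Real.exp (1/(12*K)) * (Real.sqrt (2*K) * (K/E)^k) with hBdef
  set C : ℝ := Real.sqrt π * Real.exp (1/(12*M)) * (Real.sqrt (2*M) * (M/E)^m) with hCdef
  set S : ℝ := Real.sqrt (2 * π * N * (K/N) * (M/N)) with hSdef
  have hA0 : 0 < A := by rw [hAdef]; positivity
  have hB0 : 0 < B := by rw [hBdef]; positivity
  have hC0 : 0 < C := by rw [hCdef]; positivity
  have hS0 : 0 < S := by
    rw [hSdef]
    apply Real.sqrt_pos.mpr
    have : 0 < K/N := by positivity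
    have : 0 < M/N := by positivity
    positivity
  have hA : A ≤ ((k+m)! : ℝ) := by
    have := fact_lb (k+m) (by omega)
    rw [hAdef]
    push_cast at this ⊢
    convert this using 4 <;> push_cast <;> ring
  have hB : (k ! : ℝ) ≤ B := fact_ub k hk
  have hC : (m ! : ℝ) ≤ C := fact_ub m hm
  -- key algebraic identity
  have hp1 : (N/E)^k * (K/N)^k = (K/E)^k := by
    rw [← mul_pow]; congr 1; field_simp
  have hp2 : (N/E)^m * (M/N)^m = (M/E)^m := by
    rw [← mul_pow]; congr 1; field_simp
  have hQ : (N/E)^(k+m) * ((K/N)^k * (M/N)^m) = (K/E)^k * (M/E)^m := by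
    rw [pow_add, mul_mul_mul_comm, hp1, hp2]
  have hS : S = Real.sqrt 2 * Real.sqrt π * Real.sqrt K * Real.sqrt M / Real.sqrt N := by
    have harg : 2 * π * N * (K/N) * (M/N) = 2*(π*(K*(M/N))) := by
      field_simp
    rw [hSdef, harg, Real.sqrt_mul (by norm_num), Real.sqrt_mul pi_pos.le,
      Real.sqrt_mul hK.le, Real.sqrt_div hM.le]
    ring
  have hsqrtN : Real.sqrt (2*N) = Real.sqrt 2 * Real.sqrt N := Real.sqrt_mul (by norm_num) N
  have hsqrtK : Real.sqrt (2*K) = Real.sqrt 2 * Real.sqrt K := Real.sqrt_mul (by norm_num) K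
  have hsqrtM : Real.sqrt (2*M) = Real.sqrt 2 * Real.sqrt M := Real.sqrt_mul (by norm_num) M
  have hNs : Real.sqrt N ≠ 0 := by positivity
  have step2 : A * ((K/N)^k * (M/N)^m) * S * Real.exp (1/(12*K) + 1/(12*M)) = B * C := by
    rw [hAdef, hBdef, hCdef, hS, hsqrtN, hsqrtK, hsqrtM, Real.exp_add,
      mul_assoc (Real.sqrt π), mul_assoc (Real.sqrt 2 * Real.sqrt N), hQ]
    field_simp
  -- final assembly
  have hcast : ((k+m:ℕ):ℝ) = N := by push_cast; rfl
  have hchoose : ((k+m).choose k : ℝ) = ((k+m)! : ℝ) / ((k ! : ℝ) * (m ! : ℝ)) := by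
    rw [Nat.cast_add_choose]
  rw [hchoose, div_le_iff₀ (by positivity)]
  set c : ℝ := 1/(12*K) + 1/(12*M) with hcdef
  have hec : 0 < Real.exp c := Real.exp_pos c
  have hABC : A * ((K/N)^k * (M/N)^m) * S = B * C / Real.exp c := by
    rw [eq_div_iff hec.ne']; exact step2
  have hstep : 9 ≤ (A / (B*C) * ((K/N)^k * (M/N)^m)) * (10 * S) := by
    have heq : (A / (B*C) * ((K/N)^k * (M/N)^m)) * (10 * S)
        = 10 * (A * ((K/N)^k * (M/N)^m) * S) / (B*C) := by ring
    rw [heq, hABC]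
    have h2 : 10 * (B * C / Real.exp c) / (B * C) = 10 / Real.exp c := by
      field_simp
    rw [h2, le_div_iff₀ hec]
    linarith
  refine hstep.trans ?_
  have hP : (0:ℝ) ≤ (K/N)^k * (M/N)^m := by positivity
  have hdiv : A / (B*C) ≤ ((k+m)! : ℝ) / ((k ! : ℝ) * (m ! : ℝ)) := by
    apply div_le_div₀ (by positivity) hA (by positivity)
    exact mul_le_mul hB hC (by positivity) hB0.le
  calc (A / (B*C) * ((K/N)^k * (M/N)^m)) * (10 * S)
      ≤ (((k+m)! : ℝ) / ((k ! : ℝ) * (m ! : ℝ)) * ((K/N)^k * (M/N)^m)) * (10 * S) := by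
        apply mul_le_mul_of_nonneg_right _ (by positivity)
        exact mul_le_mul_of_nonneg_right hdiv hP
    _ = ((k+m)! : ℝ) / ((k ! : ℝ) * (m ! : ℝ)) * (K/N) ^ k * (M/N) ^ m * (10 * S) := by ring

lemma c_le (k m : ℕ) (hk : 1 ≤ k) (hm : 1 ≤ m) (h5 : 5 ≤ k + m) :
    1/(12*(k:ℝ)) + 1/(12*(m:ℝ)) ≤ 5/48 := by
  have hk' : (1:ℝ) ≤ k := by exact_mod_cast hk
  have hm' : (1:ℝ) ≤ m := by exact_mod_cast hm
  rcases Nat.lt_or_ge k 2 with h | h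
  · have hm4 : (4:ℝ) ≤ m := by exact_mod_cast (by omega : 4 ≤ m)
    have h1 : 1/(12*(m:ℝ)) ≤ 1/48 := by
      rw [div_le_div_iff₀ (by positivity) (by norm_num)]; linarith
    have h2 : 1/(12*(k:ℝ)) ≤ 1/12 := by
      rw [div_le_div_iff₀ (by positivity) (by norm_num)]; linarith
    linarith
  rcases Nat.lt_or_ge m 2 with h2 | h2
  · have hk4 : (4:ℝ) ≤ k := by exact_mod_cast (by omega : 4 ≤ k)
    have h1 : 1/(12*(k:ℝ)) ≤ 1/48 := by
      rw [div_le_div_iff₀ (by positivity) (by norm_num)]; linarith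
    have h3 : 1/(12*(m:ℝ)) ≤ 1/12 := by
      rw [div_le_div_iff₀ (by positivity) (by norm_num)]; linarith
    linarith
  · have hk2 : (2:ℝ) ≤ k := by exact_mod_cast h
    have hm2 : (2:ℝ) ≤ m := by exact_mod_cast h2
    have h1 : 1/(12*(k:ℝ)) ≤ 1/24 := by
      rw [div_le_div_iff₀ (by positivity) (by norm_num)]; linarith
    have h3 : 1/(12*(m:ℝ)) ≤ 1/24 := by
      rw [div_le_div_iff₀ (by positivity) (by norm_num)]; linarith
    linarith

lemma num_helper (L a : ℝ) (ha : 0 < a) (hL : 0 ≤ L) (h : (81:ℝ) ≤ L^2 * 100 * a) :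
    9 / (10 * Real.sqrt a) ≤ L := by
  rw [div_le_iff₀ (by positivity)]
  have hs := Real.sq_sqrt ha.le
  have hs0 := Real.sqrt_nonneg a
  nlinarith [mul_nonneg hL hs0]

/-- Lower bound on the binomial probability mass at its mean: for
`X ~ B(n, p)` with `p = k/n` integer mean `k`, one has
`P(X = k) ≥ 9 / (10 √(2πnp(1−p)))`. -/
theorem binomial_at_mean_lower_bound (n k : ℕ) (hn : 3 ≤ n)
    (hk1 : 1 ≤ k) (hk2 : k ≤ n - 1) :
    (n.choose k : ℝ) * ((k : ℝ) / n) ^ k * (1 - (k : ℝ) / n) ^ (n - k)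
      ≥ 9 / (10 * Real.sqrt (2 * Real.pi * n * ((k : ℝ) / n) * (1 - (k : ℝ) / n))) := by
  obtain ⟨m, rfl⟩ : ∃ m, n = k + m := ⟨n - k, by omega⟩
  have hm : 1 ≤ m := by omega
  have hK : (0:ℝ) < k := by exact_mod_cast hk1
  have hM : (0:ℝ) < m := by exact_mod_cast hm
  have hN : (0:ℝ) < (k:ℝ)+m := by positivity
  have hsub : k + m - k = m := by omega
  have hcast : ((k+m:ℕ):ℝ) = (k:ℝ)+m := by push_cast; rfl
  have hone : 1 - (k:ℝ)/((k:ℝ)+m) = (m:ℝ)/((k:ℝ)+m) := by field_simp; ring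
  rw [ge_iff_le, hcast, hsub, hone]
  by_cases h5 : 5 ≤ k + m
  · exact core k m hk1 hm (le_trans (Real.exp_le_exp.mpr (c_le k m hk1 hm h5)) exp_five_le)
  · have hk3 : k ≤ 3 := by omega
    have hm3 : m ≤ 3 := by omega
    interval_cases k <;> interval_cases m <;> first
      | omega
      | (apply num_helper
         · positivity
         · norm_num [Nat.choose]
         · norm_num [Nat.choose]
           nlinarith [Real.pi_gt_d6])
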